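/- Deterministic regret bound for AdaGradBNG (pathwise form of Theorem 1, second inequality). Fix any realization of the samples ξ_1,…,ξ_T and run the AdaGrad with Block-Normalized Gradient updates with parameters η > 0, δ > 0. Suppose each function F(·,ξ_t) is convex and differentiable, every block gradient F_i'(x_t,ξ_t) is nonzero with ‖F_i'(x_t,ξ_t)‖₂ ≤ M_i for all t and i, and ‖x_t − x*‖_∞ ≤ D_∞ for all t, for a fixed point x* ∈ R^d. Then (1/T)∑_{t=1}^T [F(x_t,ξ_t) − F(x*,ξ_t)] ≤ ‖x_1 − x*‖²_{H_1}/(2ηT) + D_∞²√(Bd)/(2η√T) + ∑_{i=1}^B η M_i² √(d_i)/√T. -/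

import Mathlib

open Finset

lemma convex_grad_ineq {E : Type*} [NormedAddCommGroup E] [InnerProductSpace ℝ E]
    [CompleteSpace E] {f : E → ℝ} {G a b : E}
    (hc : ConvexOn ℝ Set.univ f) (hg : HasGradientAt f G a) :
    f a - f b ≤ @inner ℝ _ _ G (a - b) := by
  set v : E := b - a with hv
  have hcurve : HasDerivAt (fun r : ℝ => a + r • v) v 0 := by
    simpa using ((hasDerivAt_id (0:ℝ)).smul_const v).const_add a
  have hFD : HasFDerivAt f (InnerProductSpace.toDual ℝ E G) a := hg
  have hφd : HasDerivAt (fun r : ℝ => f (a + r • v)) (@inner ℝ _ _ G v) 0 := by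
    have h0 : a + (0:ℝ) • v = a := by simp
    have := HasFDerivAt.comp_hasDerivAt (x := (0:ℝ)) (h0.symm ▸ hFD) hcurve
    simpa [Function.comp_def, InnerProductSpace.toDual_apply_apply] using this
  have hφc : ConvexOn ℝ Set.univ (fun r : ℝ => f (a + r • v)) := by
    have h := hc.comp_affineMap (AffineMap.lineMap a b)
    have he : (f ∘ (AffineMap.lineMap a b : ℝ →ᵃ[ℝ] E)) = fun r : ℝ => f (a + r • v) := by
      funext r
      simp [Function.comp, AffineMap.lineMap_apply, hv, add_comm]
    simpa [he] using h
  have hs := hφc.le_slope_of_hasDerivAt (Set.mem_univ (0:ℝ)) (Set.mem_univ (1:ℝ))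
    one_pos hφd
  have hslope : slope (fun r : ℝ => f (a + r • v)) 0 1 = f b - f a := by
    simp [slope, hv]
  rw [hslope] at hs
  have heq : @inner ℝ _ _ G (a - b) = -(@inner ℝ _ _ G v) := by
    rw [hv, ← neg_sub b a, inner_neg_right]
  linarith [hs, heq.le, heq.ge]

lemma abel_aux (a Δ : ℕ → ℝ) (C : ℝ) :
    ∀ n : ℕ, (∀ t ≤ n + 1, 0 ≤ Δ t) → (∀ t ≤ n + 1, Δ t ≤ C) →
      (∀ t < n, a t ≤ a (t + 1)) → (∀ t ≤ n, 0 ≤ a t) →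
      ∑ t ∈ Finset.range (n + 1), a t * (Δ t - Δ (t + 1)) ≤
        a 0 * Δ 0 + C * (a n - a 0) - a n * Δ (n + 1) := by
  intro n
  induction n with
  | zero =>
    intro _ _ _ _
    rw [zero_add, Finset.sum_range_one]
    apply le_of_eq; ring
  | succ n ih =>
    intro h0 hC hm ha
    rw [Finset.sum_range_succ]
    have IH := ih (fun t ht => h0 t (by omega)) (fun t ht => hC t (by omega))
      (fun t ht => hm t (by omega)) (fun t ht => ha t (by omega))
    have h1 : (a (n+1) - a n) * Δ (n+1) ≤ (a (n+1) - a n) * C := by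
      apply mul_le_mul_of_nonneg_left (hC (n+1) (by omega))
      linarith [hm n (by omega)]
    nlinarith [IH, h1]

lemma adagrad_step (δ P S gq : ℝ) (hδ : 0 < δ) (hP : 0 ≤ P) (hPS : P ≤ S)
    (hsq : S ^ 2 = P ^ 2 + gq ^ 2) :
    gq ^ 2 / (δ + S) ≤ 2 * (S - P) := by
  have hS : 0 ≤ S := le_trans hP hPS
  rw [div_le_iff₀ (by linarith)]
  nlinarith [sq_nonneg (S - P)]


/-- Euclidean norm of the `i`-th block of a vector in `ℝ^d`, where `ℝ^d` is
partitioned into `B` blocks of sizes `dsz 1, …, dsz B` (coordinates are indexed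
by pairs `⟨i, j⟩` with `i` the block index). -/
noncomputable def blockNorm {B : ℕ} {dsz : Fin B → ℕ} (i : Fin B)
    (v : EuclideanSpace ℝ ((i : Fin B) × Fin (dsz i))) : ℝ :=
  Real.sqrt (∑ j : Fin (dsz i), v ⟨i, j⟩ ^ 2)

/-- **Deterministic regret bound for AdaGrad with Block-Normalized Gradient**
(pathwise form of Theorem 1, second inequality).

Iterations are indexed by `t = 0, 1, …, T-1` (corresponding to `t = 1, …, T` in the
paper), so `x 0` is the initial point `x_1`, `ξ t` is the fixed realization of the
`t`-th sample, `F' y a` is the gradient of the convex differentiable function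
`F (·) a` at `y`, `g t` is the block-normalized gradient at iteration `t`,
`s t k = ‖g_{1:t,k}‖₂` collects the row norms, `H_t = δ I + diag (s t)`, and the
update is `x (t+1) = x t − τ_t ∘ g t` with
`τ_t ⟨i,j⟩ = η ‖F_i'(x_t,ξ_t)‖₂ / (δ + s_t ⟨i,j⟩)`.  Assuming every block gradient
along the trajectory is nonzero with `‖F_i'(x_t,ξ_t)‖₂ ≤ M i` and
`‖x_t − x*‖_∞ ≤ D∞`, the average regret is bounded by
`‖x_1 − x*‖²_{H_1}/(2ηT) + D∞²√(Bd)/(2η√T) + ∑_i η M_i² √(d_i)/√T`. -/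
theorem adagrad_bng_pathwise_regret_second (B : ℕ) (dsz : Fin B → ℕ)
    (𝒳 : Type*) (T : ℕ) (hT : 0 < T) (ξ : ℕ → 𝒳)
    (F : EuclideanSpace ℝ ((i : Fin B) × Fin (dsz i)) → 𝒳 → ℝ)
    (F' : EuclideanSpace ℝ ((i : Fin B) × Fin (dsz i)) → 𝒳 →
      EuclideanSpace ℝ ((i : Fin B) × Fin (dsz i)))
    (hconv : ∀ t < T, ConvexOn ℝ Set.univ (fun y => F y (ξ t)))
    (hgrad : ∀ t < T, ∀ y, HasGradientAt (fun z => F z (ξ t)) (F' y (ξ t)) y)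
    (η δ : ℝ) (hη : 0 < η) (hδ : 0 < δ)
    (x : ℕ → EuclideanSpace ℝ ((i : Fin B) × Fin (dsz i)))
    (g : ℕ → EuclideanSpace ℝ ((i : Fin B) × Fin (dsz i)))
    (s : ℕ → ((i : Fin B) × Fin (dsz i)) → ℝ)
    (hg : ∀ t < T, ∀ k : (i : Fin B) × Fin (dsz i),
      g t k = F' (x t) (ξ t) k / blockNorm k.1 (F' (x t) (ξ t)))
    (hs : ∀ t < T, ∀ k : (i : Fin B) × Fin (dsz i),
      s t k = Real.sqrt (∑ r ∈ Finset.range (t + 1), g r k ^ 2))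
    (hupd : ∀ t < T, ∀ k : (i : Fin B) × Fin (dsz i),
      x (t + 1) k = x t k -
        (η * blockNorm k.1 (F' (x t) (ξ t)) / (δ + s t k)) * g t k)
    (M : Fin B → ℝ) (xstar : EuclideanSpace ℝ ((i : Fin B) × Fin (dsz i)))
    (Dinf : ℝ) (hDinf : 0 < Dinf)
    (hnz : ∀ t < T, ∀ i : Fin B, blockNorm i (F' (x t) (ξ t)) ≠ 0)
    (hM : ∀ t < T, ∀ i : Fin B, blockNorm i (F' (x t) (ξ t)) ≤ M i)
    (hD : ∀ t ≤ T, ∀ k : (i : Fin B) × Fin (dsz i), |x t k - xstar k| ≤ Dinf) :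
    (1 / (T : ℝ)) * ∑ t ∈ Finset.range T, (F (x t) (ξ t) - F xstar (ξ t)) ≤
      (∑ k : (i : Fin B) × Fin (dsz i), (δ + s 0 k) * (x 0 k - xstar k) ^ 2)
        / (2 * η * T)
      + Dinf ^ 2 * Real.sqrt ((B : ℝ) * ∑ i : Fin B, (dsz i : ℝ))
          / (2 * η * Real.sqrt T)
      + ∑ i : Fin B, η * M i ^ 2 * Real.sqrt (dsz i) / Real.sqrt T := by
  obtain ⟨Tp, rfl⟩ : ∃ n, T = n + 1 := ⟨T - 1, by omega⟩
  have hT' : (0:ℝ) < (Tp:ℝ) + 1 := by positivity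
  have hsT : 0 < Real.sqrt ((Tp:ℝ) + 1) := Real.sqrt_pos.mpr hT'
  set u : ((i : Fin B) × Fin (dsz i)) → ℕ → ℝ :=
    fun k t => Real.sqrt (∑ r ∈ Finset.range t, g r k ^ 2) with hu_def
  have hunn : ∀ k t, 0 ≤ u k t := fun k t => Real.sqrt_nonneg _
  have husq : ∀ k t, u k t ^ 2 = ∑ r ∈ Finset.range t, g r k ^ 2 := by
    intro k t
    simp only [hu_def]
    exact Real.sq_sqrt (Finset.sum_nonneg fun r _ => sq_nonneg _)
  have humono : ∀ k, Monotone (u k) := by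
    intro k m n h
    simp only [hu_def]
    exact Real.sqrt_le_sqrt (Finset.sum_le_sum_of_subset_of_nonneg
      (Finset.range_subset_range.2 h) (fun r _ _ => sq_nonneg _))
  have hu0 : ∀ k, u k 0 = 0 := by intro k; simp [hu_def]
  have hsu : ∀ t, t < Tp + 1 → ∀ k, s t k = u k (t + 1) := by
    intro t ht k
    simp only [hu_def]
    exact hs t ht k
  have hdspos : ∀ k t, 0 < δ + u k t := fun k t => by linarith [hunn k t]
  have hNpos : ∀ t < Tp + 1, ∀ i, 0 < blockNorm i (F' (x t) (ξ t)) := by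
    intro t ht i
    exact lt_of_le_of_ne (Real.sqrt_nonneg _) (Ne.symm (hnz t ht i))
  have hMpos : ∀ i, 0 < M i := fun i =>
    lt_of_lt_of_le (hNpos 0 (by omega) i) (hM 0 (by omega) i)
  have hFg : ∀ t < Tp + 1, ∀ k, F' (x t) (ξ t) k
      = blockNorm k.1 (F' (x t) (ξ t)) * g t k := by
    intro t ht k
    rw [hg t ht k]
    field_simp [hnz t ht k.1]
  have hblock1 : ∀ t < Tp + 1, ∀ i, ∑ j : Fin (dsz i), g t ⟨i, j⟩ ^ 2 = 1 := by
    intro t ht i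
    have hN := hNpos t ht i
    have hrw : ∀ j : Fin (dsz i), g t ⟨i, j⟩ ^ 2
        = F' (x t) (ξ t) ⟨i, j⟩ ^ 2 / blockNorm i (F' (x t) (ξ t)) ^ 2 := by
      intro j
      rw [hg t ht ⟨i, j⟩, div_pow]
    rw [Finset.sum_congr rfl (fun j _ => hrw j), ← Finset.sum_div]
    have hbn : blockNorm i (F' (x t) (ξ t)) ^ 2
        = ∑ j : Fin (dsz i), F' (x t) (ξ t) ⟨i, j⟩ ^ 2 :=
      Real.sq_sqrt (Finset.sum_nonneg fun j _ => sq_nonneg _)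
    rw [← hbn, div_self (pow_ne_zero _ hN.ne')]
  have hublock : ∀ i, ∑ j : Fin (dsz i), u ⟨i, j⟩ (Tp + 1) ^ 2 = (Tp:ℝ) + 1 := by
    intro i
    rw [Finset.sum_congr rfl fun j _ => husq ⟨i, j⟩ (Tp + 1), Finset.sum_comm,
      Finset.sum_congr rfl fun r hr => hblock1 r (Finset.mem_range.mp hr) i]
    simp
  have hCSblock : ∀ i, ∑ j : Fin (dsz i), u ⟨i, j⟩ (Tp + 1)
      ≤ Real.sqrt (dsz i) * Real.sqrt ((Tp:ℝ) + 1) := by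
    intro i
    have h := Real.sum_mul_le_sqrt_mul_sqrt Finset.univ (fun _ => (1:ℝ))
      (fun j : Fin (dsz i) => u ⟨i, j⟩ (Tp + 1))
    simp only [one_mul, one_pow] at h
    calc ∑ j : Fin (dsz i), u ⟨i, j⟩ (Tp + 1) ≤
        Real.sqrt (∑ _j : Fin (dsz i), (1:ℝ)) *
          Real.sqrt (∑ j : Fin (dsz i), u ⟨i, j⟩ (Tp + 1) ^ 2) := h
      _ = Real.sqrt (dsz i) * Real.sqrt ((Tp:ℝ) + 1) := by
          rw [hublock i]
          congr 1
          congr 1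
          simp
  have hCStotal : ∑ k : (i : Fin B) × Fin (dsz i), u k (Tp + 1)
      ≤ Real.sqrt ((B:ℝ) * ∑ i : Fin B, (dsz i : ℝ)) * Real.sqrt ((Tp:ℝ) + 1) := by
    have h := Real.sum_mul_le_sqrt_mul_sqrt Finset.univ (fun _ => (1:ℝ))
      (fun k : (i : Fin B) × Fin (dsz i) => u k (Tp + 1))
    simp only [one_mul, one_pow] at h
    have h1 : (∑ _k : (i : Fin B) × Fin (dsz i), (1:ℝ)) = ∑ i : Fin B, (dsz i : ℝ) := by
      rw [← Finset.univ_sigma_univ, Finset.sum_sigma]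
      simp
    have h2 : (∑ k : (i : Fin B) × Fin (dsz i), u k (Tp + 1) ^ 2)
        = (B:ℝ) * ((Tp:ℝ) + 1) := by
      rw [← Finset.univ_sigma_univ, Finset.sum_sigma,
        Finset.sum_congr rfl fun i _ => hublock i]
      simp only [Finset.sum_const, Finset.card_univ, Fintype.card_fin, nsmul_eq_mul]
    rw [h1, h2] at h
    calc ∑ k : (i : Fin B) × Fin (dsz i), u k (Tp + 1)
        ≤ Real.sqrt (∑ i : Fin B, (dsz i : ℝ)) * Real.sqrt ((B:ℝ) * ((Tp:ℝ) + 1)) := h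
      _ = Real.sqrt ((B:ℝ) * ∑ i : Fin B, (dsz i : ℝ)) * Real.sqrt ((Tp:ℝ) + 1) := by
          rw [Real.sqrt_mul (by positivity), Real.sqrt_mul (by positivity)]
          ring
  -- per-coordinate identity from the update rule
  have hkey : ∀ t < Tp + 1, ∀ k, F' (x t) (ξ t) k * (x t k - xstar k) =
      (δ + u k (t + 1)) / (2 * η) *
        ((x t k - xstar k) ^ 2 - (x (t + 1) k - xstar k) ^ 2)
      + η * F' (x t) (ξ t) k ^ 2 / (2 * (δ + u k (t + 1))) := by
    intro t ht k
    have hN := hNpos t ht k.1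
    have hds := hdspos k (t + 1)
    have hx1 : x (t + 1) k = x t k - (η / (δ + u k (t + 1))) * F' (x t) (ξ t) k := by
      rw [hupd t ht k, hg t ht k, hsu t ht k]
      field_simp
    rw [hx1]
    field_simp
    ring
  -- convexity linearization
  have hlin : ∀ t < Tp + 1, F (x t) (ξ t) - F xstar (ξ t)
      ≤ ∑ k : (i : Fin B) × Fin (dsz i), F' (x t) (ξ t) k * (x t k - xstar k) := by
    intro t ht
    have h := convex_grad_ineq (b := xstar) (hconv t ht) (hgrad t ht (x t))
    have hin : @inner ℝ _ _ (F' (x t) (ξ t)) (x t - xstar)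
        = ∑ k : (i : Fin B) × Fin (dsz i), F' (x t) (ξ t) k * (x t k - xstar k) := by
      rw [PiLp.inner_apply]
      apply Finset.sum_congr rfl
      intro k _
      simp [RCLike.inner_apply, PiLp.sub_apply]
      ring
    linarith [h, hin.le, hin.ge]
  -- telescoping sum over one coordinate
  have hqsum : ∀ k, ∑ t ∈ Finset.range (Tp + 1), g t k ^ 2 / (δ + u k (t + 1))
      ≤ 2 * u k (Tp + 1) := by
    intro k
    have hstep : ∀ t, g t k ^ 2 / (δ + u k (t + 1)) ≤ 2 * u k (t + 1) - 2 * u k t := by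
      intro t
      have h := adagrad_step δ (u k t) (u k (t + 1)) (g t k) hδ (hunn k t)
        (humono k (Nat.le_succ t)) (by rw [husq, husq, Finset.sum_range_succ])
      linarith
    calc ∑ t ∈ Finset.range (Tp + 1), g t k ^ 2 / (δ + u k (t + 1))
        ≤ ∑ t ∈ Finset.range (Tp + 1), (2 * u k (t + 1) - 2 * u k t) :=
          Finset.sum_le_sum fun t _ => hstep t
      _ = 2 * u k (Tp + 1) - 2 * u k 0 :=
          Finset.sum_range_sub (fun t => 2 * u k t) (Tp + 1)
      _ = 2 * u k (Tp + 1) := by rw [hu0 k]; ring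
  -- Term 1 bound (telescoping / Abel)
  have hT1 : ∑ t ∈ Finset.range (Tp + 1), ∑ k : (i : Fin B) × Fin (dsz i),
      (δ + u k (t + 1)) / (2 * η) *
        ((x t k - xstar k) ^ 2 - (x (t + 1) k - xstar k) ^ 2)
      ≤ (∑ k : (i : Fin B) × Fin (dsz i), (δ + u k 1) * (x 0 k - xstar k) ^ 2) / (2 * η)
        + Dinf ^ 2 / (2 * η) *
          (Real.sqrt ((B:ℝ) * ∑ i : Fin B, (dsz i : ℝ)) * Real.sqrt ((Tp:ℝ) + 1)) := by
    rw [Finset.sum_comm]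
    have hk : ∀ k : (i : Fin B) × Fin (dsz i),
        ∑ t ∈ Finset.range (Tp + 1), (δ + u k (t + 1)) / (2 * η) *
          ((x t k - xstar k) ^ 2 - (x (t + 1) k - xstar k) ^ 2)
        ≤ (δ + u k 1) / (2 * η) * (x 0 k - xstar k) ^ 2
          + Dinf ^ 2 / (2 * η) * u k (Tp + 1) := by
      intro k
      have habel := abel_aux (fun t => (δ + u k (t + 1)) / (2 * η))
        (fun t => (x t k - xstar k) ^ 2) (Dinf ^ 2) Tp
        (fun t _ => sq_nonneg _)
        (fun t ht => by
          have hd := hD t (by omega) k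
          calc (x t k - xstar k) ^ 2 = |x t k - xstar k| ^ 2 := (sq_abs _).symm
            _ ≤ Dinf ^ 2 := pow_le_pow_left₀ (abs_nonneg _) hd 2)
        (fun t _ => by
          have hmn := humono k (show t + 1 ≤ t + 1 + 1 by omega)
          have h2η : (0:ℝ) < 2 * η := by positivity
          exact (div_le_div_iff_of_pos_right h2η).mpr (by linarith))
        (fun t _ => by positivity)
      have h1 : 0 ≤ (δ + u k (Tp + 1)) / (2 * η) * (x (Tp + 1) k - xstar k) ^ 2 := by
        positivity
      have h2 : Dinf ^ 2 * ((δ + u k (Tp + 1)) / (2 * η) - (δ + u k 1) / (2 * η))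
          ≤ Dinf ^ 2 / (2 * η) * u k (Tp + 1) := by
        have hre : Dinf ^ 2 * ((δ + u k (Tp + 1)) / (2 * η) - (δ + u k 1) / (2 * η))
            = Dinf ^ 2 * (u k (Tp + 1) - u k 1) / (2 * η) := by ring
        have hre2 : Dinf ^ 2 / (2 * η) * u k (Tp + 1)
            = Dinf ^ 2 * u k (Tp + 1) / (2 * η) := by ring
        rw [hre, hre2]
        have h2η : (0:ℝ) < 2 * η := by positivity
        refine (div_le_div_iff_of_pos_right h2η).mpr ?_
        apply mul_le_mul_of_nonneg_left _ (sq_nonneg _)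
        linarith [hunn k 1]
      linarith [habel, h1, h2]
    calc ∑ k : (i : Fin B) × Fin (dsz i), ∑ t ∈ Finset.range (Tp + 1),
          (δ + u k (t + 1)) / (2 * η) *
            ((x t k - xstar k) ^ 2 - (x (t + 1) k - xstar k) ^ 2)
        ≤ ∑ k : (i : Fin B) × Fin (dsz i),
            ((δ + u k 1) / (2 * η) * (x 0 k - xstar k) ^ 2
              + Dinf ^ 2 / (2 * η) * u k (Tp + 1)) :=
          Finset.sum_le_sum fun k _ => hk k
      _ = (∑ k : (i : Fin B) × Fin (dsz i), (δ + u k 1) * (x 0 k - xstar k) ^ 2) / (2 * η)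
          + Dinf ^ 2 / (2 * η) * ∑ k : (i : Fin B) × Fin (dsz i), u k (Tp + 1) := by
          rw [Finset.sum_add_distrib, ← Finset.mul_sum, Finset.sum_div]
          congr 1
          apply Finset.sum_congr rfl
          intro k _
          ring
      _ ≤ _ := by
          gcongr
  -- Term 2 bound
  have hT2 : ∑ t ∈ Finset.range (Tp + 1), ∑ k : (i : Fin B) × Fin (dsz i),
      η * F' (x t) (ξ t) k ^ 2 / (2 * (δ + u k (t + 1)))
      ≤ (∑ i : Fin B, η * M i ^ 2 * Real.sqrt (dsz i)) * Real.sqrt ((Tp:ℝ) + 1) := by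
    have hpt : ∀ t < Tp + 1, ∀ k : (i : Fin B) × Fin (dsz i),
        η * F' (x t) (ξ t) k ^ 2 / (2 * (δ + u k (t + 1)))
        ≤ η * M k.1 ^ 2 / 2 * (g t k ^ 2 / (δ + u k (t + 1))) := by
      intro t ht k
      have hN := hNpos t ht k.1
      have hds := hdspos k (t + 1)
      have hNM : blockNorm k.1 (F' (x t) (ξ t)) ^ 2 ≤ M k.1 ^ 2 :=
        pow_le_pow_left₀ hN.le (hM t ht k.1) 2
      rw [hFg t ht k, mul_pow]
      have hre : η * M k.1 ^ 2 / 2 * (g t k ^ 2 / (δ + u k (t + 1)))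
          = η * (M k.1 ^ 2 * g t k ^ 2) / (2 * (δ + u k (t + 1))) := by
        field_simp
      rw [hre]
      gcongr
    calc ∑ t ∈ Finset.range (Tp + 1), ∑ k : (i : Fin B) × Fin (dsz i),
          η * F' (x t) (ξ t) k ^ 2 / (2 * (δ + u k (t + 1)))
        ≤ ∑ t ∈ Finset.range (Tp + 1), ∑ k : (i : Fin B) × Fin (dsz i),
            η * M k.1 ^ 2 / 2 * (g t k ^ 2 / (δ + u k (t + 1))) :=
          Finset.sum_le_sum fun t ht => Finset.sum_le_sum
            fun k _ => hpt t (Finset.mem_range.mp ht) k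
      _ = ∑ k : (i : Fin B) × Fin (dsz i), η * M k.1 ^ 2 / 2 *
            ∑ t ∈ Finset.range (Tp + 1), g t k ^ 2 / (δ + u k (t + 1)) := by
          rw [Finset.sum_comm]
          exact Finset.sum_congr rfl fun k _ => (Finset.mul_sum _ _ _).symm
      _ ≤ ∑ k : (i : Fin B) × Fin (dsz i), η * M k.1 ^ 2 / 2 * (2 * u k (Tp + 1)) :=
          Finset.sum_le_sum fun k _ =>
            mul_le_mul_of_nonneg_left (hqsum k) (by positivity)
      _ = ∑ i : Fin B, η * M i ^ 2 * ∑ j : Fin (dsz i), u ⟨i, j⟩ (Tp + 1) := by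
          rw [← Finset.univ_sigma_univ, Finset.sum_sigma]
          apply Finset.sum_congr rfl
          intro i _
          rw [Finset.mul_sum]
          apply Finset.sum_congr rfl
          intro j _
          ring
      _ ≤ ∑ i : Fin B, η * M i ^ 2 * (Real.sqrt (dsz i) * Real.sqrt ((Tp:ℝ) + 1)) :=
          Finset.sum_le_sum fun i _ =>
            mul_le_mul_of_nonneg_left (hCSblock i) (by positivity)
      _ = _ := by
          rw [Finset.sum_mul]
          apply Finset.sum_congr rfl
          intro i _
          ring
  -- assemble
  have hsum1 : ∑ t ∈ Finset.range (Tp + 1), (F (x t) (ξ t) - F xstar (ξ t)) ≤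
      ∑ t ∈ Finset.range (Tp + 1), ∑ k : (i : Fin B) × Fin (dsz i),
        F' (x t) (ξ t) k * (x t k - xstar k) :=
    Finset.sum_le_sum fun t ht => hlin t (Finset.mem_range.mp ht)
  have hsum2 : ∑ t ∈ Finset.range (Tp + 1), ∑ k : (i : Fin B) × Fin (dsz i),
      F' (x t) (ξ t) k * (x t k - xstar k)
      = (∑ t ∈ Finset.range (Tp + 1), ∑ k : (i : Fin B) × Fin (dsz i),
          (δ + u k (t + 1)) / (2 * η) *
            ((x t k - xstar k) ^ 2 - (x (t + 1) k - xstar k) ^ 2))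
        + ∑ t ∈ Finset.range (Tp + 1), ∑ k : (i : Fin B) × Fin (dsz i),
            η * F' (x t) (ξ t) k ^ 2 / (2 * (δ + u k (t + 1))) := by
    rw [← Finset.sum_add_distrib]
    apply Finset.sum_congr rfl
    intro t ht
    rw [← Finset.sum_add_distrib]
    exact Finset.sum_congr rfl fun k _ => hkey t (Finset.mem_range.mp ht) k
  have hfinal : ∑ t ∈ Finset.range (Tp + 1), (F (x t) (ξ t) - F xstar (ξ t)) ≤
      (∑ k : (i : Fin B) × Fin (dsz i), (δ + u k 1) * (x 0 k - xstar k) ^ 2) / (2 * η)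
      + Dinf ^ 2 / (2 * η) *
          (Real.sqrt ((B:ℝ) * ∑ i : Fin B, (dsz i : ℝ)) * Real.sqrt ((Tp:ℝ) + 1))
      + (∑ i : Fin B, η * M i ^ 2 * Real.sqrt (dsz i)) * Real.sqrt ((Tp:ℝ) + 1) := by
    rw [hsum2] at hsum1
    linarith [hT1, hT2]
  have hgoalA : (∑ k : (i : Fin B) × Fin (dsz i), (δ + s 0 k) * (x 0 k - xstar k) ^ 2)
      = ∑ k : (i : Fin B) × Fin (dsz i), (δ + u k 1) * (x 0 k - xstar k) ^ 2 :=
    Finset.sum_congr rfl fun k _ => by rw [hsu 0 (by omega) k]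
  have hc : ((Tp + 1 : ℕ) : ℝ) = (Tp:ℝ) + 1 := by push_cast; ring
  rw [hgoalA, hc]
  rw [show (∑ i : Fin B, η * M i ^ 2 * Real.sqrt (dsz i) / Real.sqrt ((Tp:ℝ) + 1))
      = (∑ i : Fin B, η * M i ^ 2 * Real.sqrt (dsz i)) / Real.sqrt ((Tp:ℝ) + 1)
      from (Finset.sum_div _ _ _).symm]
  set A := ∑ k : (i : Fin B) × Fin (dsz i), (δ + u k 1) * (x 0 k - xstar k) ^ 2 with hA
  set W := Real.sqrt ((B:ℝ) * ∑ i : Fin B, (dsz i : ℝ)) with hW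
  set S3 := ∑ i : Fin B, η * M i ^ 2 * Real.sqrt (dsz i) with hS3
  set st := Real.sqrt ((Tp:ℝ) + 1) with hst
  have hstst : (Tp:ℝ) + 1 = st * st := (Real.mul_self_sqrt hT'.le).symm
  have h1T : (0:ℝ) < 1 / ((Tp:ℝ) + 1) := by positivity
  calc (1 / ((Tp:ℝ) + 1)) * ∑ t ∈ Finset.range (Tp + 1), (F (x t) (ξ t) - F xstar (ξ t))
      ≤ (1 / ((Tp:ℝ) + 1)) *
          (A / (2 * η) + Dinf ^ 2 / (2 * η) * (W * st) + S3 * st) :=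
        mul_le_mul_of_nonneg_left hfinal h1T.le
    _ = A / (2 * η * ((Tp:ℝ) + 1)) + Dinf ^ 2 * W / (2 * η * st) + S3 / st := by
        rw [hstst]
        have hstne : st ≠ 0 := hsT.ne'
        have hηne : η ≠ 0 := hη.ne'
        field_simp
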